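/- arXiv:1410.2706 — 7 statements merged into one kernel-verified Lean document; each statement's English description precedes it below -/
import Mathlib

section
/- Let a_1, a_2, a_3, a_4, b_1, b_2, b_3, b_4 > 0 satisfy a_1+a_2+a_3+a_4 ≤ b_1+b_2+b_3+b_4; a_1a_2+a_1a_3+a_2a_3+a_1a_4+a_2a_4+a_3a_4 ≤ b_1b_2+b_1b_3+b_2b_3+b_1b_4+b_2b_4+b_3b_4; a_1a_2a_3+a_1a_2a_4+a_2a_3a_4+a_1a_3a_4 ≤ b_1b_2b_3+b_1b_2b_4+b_2b_3b_4+b_1b_3b_4; and a_1a_2a_3a_4 = b_1b_2b_3b_4. Then (log a_1)^2+(log a_2)^2+(log a_3)^2+(log a_4)^2 ≤ (log b_1)^2+(log b_2)^2+(log b_3)^2+(log b_4)^2. -/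
open Real MeasureTheory Set Filter

noncomputable def gker (x s : ℝ) : ℝ :=
  (2/(s*(1+s))) * ((1+s) * (Real.log (x+s) - Real.log (1+s)) - Real.log x)

-- MVT bound
lemma gker_bound {x s : ℝ} (hx : 0 < x) (hs : 0 < s) :
    |gker x s| ≤ 2*(x-1)^2/(min 1 x) * (((min 1 x)+s)*(1+s))⁻¹ := by
  set m := min 1 x with hm
  have hm0 : 0 < m := lt_min one_pos hx
  set M := max 1 x with hM
  have hmM : m ≤ M := min_le_max
  have h1s : (0:ℝ) < 1 + s := by linarith
  -- ψ u = (1+s) log(u+s) - log u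
  set ψ : ℝ → ℝ := fun u => (1+s) * Real.log (u+s) - Real.log u with hψ
  have hd : ∀ u ∈ Icc m M, HasDerivWithinAt ψ (s*(u-1)/(u*(u+s))) (Icc m M) u := by
    intro u hu
    have hu0 : 0 < u := lt_of_lt_of_le hm0 hu.1
    have hus : 0 < u + s := by linarith
    have d1 : HasDerivAt (fun u : ℝ => Real.log (u+s)) (1/(u+s)) u := by
      have := ((hasDerivAt_id u).add_const s).log hus.ne'
      simpa using this
    have d2 : HasDerivAt (fun u : ℝ => Real.log u) (1/u) u := by simpa using Real.hasDerivAt_log hu0.ne'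
    have := (d1.const_mul (1+s)).sub d2
    have heq : (1+s) * (1/(u+s)) - 1/u = s*(u-1)/(u*(u+s)) := by
      field_simp
      ring
    rw [heq] at this
    exact this.hasDerivWithinAt
  have hbd : ∀ u ∈ Icc m M, ‖s*(u-1)/(u*(u+s))‖ ≤ s*|x-1|/(m*(m+s)) := by
    intro u hu
    have hu0 : 0 < u := lt_of_lt_of_le hm0 hu.1
    have hus : 0 < u + s := by linarith
    rw [Real.norm_eq_abs, abs_div, abs_mul, abs_mul, abs_of_pos hs, abs_of_pos hu0,
      abs_of_pos hus]
    have h1 : |u - 1| ≤ |x - 1| := by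
      rcases le_total 1 x with h | h
      · rw [abs_of_nonneg (by linarith : (0:ℝ) ≤ x - 1)]
        have : M = x := max_eq_right h
        have : u ≤ x := by rw [← this]; exact hu.2
        have hm1 : m = 1 := min_eq_left h
        have : 1 ≤ u := by rw [← hm1]; exact hu.1
        rw [abs_of_nonneg (by linarith)]
        linarith
      · rw [abs_of_nonpos (by linarith : x - 1 ≤ 0)]
        have hm1 : m = x := min_eq_right h
        have hM1 : M = 1 := max_eq_left h
        have hux : x ≤ u := by rw [← hm1]; exact hu.1
        have hu1 : u ≤ 1 := by rw [← hM1]; exact hu.2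
        rw [abs_of_nonpos (by linarith)]
        linarith
    have h2 : m * (m + s) ≤ u * (u + s) := by
      apply mul_le_mul hu.1 (by linarith [hu.1]) (by linarith) hu0.le
    calc s * |u-1| / (u*(u+s)) ≤ s * |x-1| / (u*(u+s)) := by
          apply div_le_div_of_nonneg_right ?_ (by positivity)
          · exact mul_le_mul_of_nonneg_left h1 hs.le
      _ ≤ s * |x-1| / (m*(m+s)) := by
          apply div_le_div_of_nonneg_left (by positivity) (by positivity) h2
  have key := (convex_Icc m M).norm_image_sub_le_of_norm_hasDerivWithin_le hd hbd
    (⟨min_le_left _ _, le_max_left _ _⟩ : (1:ℝ) ∈ Icc m M)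
    (⟨min_le_right _ _, le_max_right _ _⟩ : x ∈ Icc m M)
  -- key : ‖ψ x - ψ 1‖ ≤ s*|x-1|/(m*(m+s)) * ‖x - 1‖
  have hψx : gker x s = (2/(s*(1+s))) * (ψ x - ψ 1) := by
    simp only [hψ, gker, Real.log_one]
    ring
  rw [hψx, abs_mul]
  have h2pos : |2/(s*(1+s))| = 2/(s*(1+s)) := abs_of_pos (by positivity)
  rw [h2pos]
  have : ‖ψ x - ψ 1‖ = |ψ x - ψ 1| := rfl
  rw [this, Real.norm_eq_abs] at key
  calc 2/(s*(1+s)) * |ψ x - ψ 1| ≤ 2/(s*(1+s)) * (s*|x-1|/(m*(m+s)) * |x-1|) := by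
        apply mul_le_mul_of_nonneg_left key (by positivity)
    _ = 2*(x-1)^2/m * ((m+s)*(1+s))⁻¹ := by
        have habs : |x-1| * |x-1| = (x-1)^2 := by
          rw [← abs_mul, abs_of_nonneg (mul_self_nonneg _)]; ring
        rw [← habs]
        field_simp


-- antiderivative of 1/((c+s)(1+s))
lemma Gderiv (c : ℝ) (hc : 0 < c) (hc1 : c ≠ 1) {s : ℝ} (hs : 0 ≤ s) :
    HasDerivAt (fun s : ℝ => (Real.log (1+s) - Real.log (c+s)) / (c-1))
      (((c+s)*(1+s))⁻¹) s := by
  have h1 : (0:ℝ) < 1 + s := by linarith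
  have h2 : (0:ℝ) < c + s := by linarith
  have d1 : HasDerivAt (fun s : ℝ => Real.log (1+s)) (1/(1+s)) s := by
    have := ((hasDerivAt_id s).const_add (1:ℝ)).log h1.ne'
    simpa using this
  have d2 : HasDerivAt (fun s : ℝ => Real.log (c+s)) (1/(c+s)) s := by
    have := ((hasDerivAt_id s).const_add c).log h2.ne'
    simpa using this
  have := (d1.sub d2).div_const (c-1)
  refine this.congr_deriv ?_
  have hc1' : c - 1 ≠ 0 := sub_ne_zero.mpr hc1
  field_simp
  ring

lemma Gtend (c : ℝ) (hc : 0 < c) :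
    Tendsto (fun s : ℝ => (Real.log (1+s) - Real.log (c+s)) / (c-1)) atTop (nhds 0) := by
  have h : Tendsto (fun s : ℝ => (1+s)/(c+s)) atTop (nhds 1) := by
    have : ∀ᶠ s : ℝ in atTop, (1+s)/(c+s) = 1 + (1-c)/(c+s) := by
      filter_upwards [eventually_gt_atTop 0] with s hs
      have : c + s ≠ 0 := by positivity
      field_simp
      ring
    rw [tendsto_congr' this]
    have : Tendsto (fun s : ℝ => (1-c)/(c+s)) atTop (nhds 0) :=
      Tendsto.div_atTop tendsto_const_nhds (tendsto_atTop_add_const_left _ _ tendsto_id)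
    simpa using this.const_add 1
  have hlog : Tendsto (fun s : ℝ => Real.log ((1+s)/(c+s))) atTop (nhds 0) := by
    have := (Real.continuousAt_log one_ne_zero).tendsto.comp h
    simpa [Function.comp_def] using this
  have : ∀ᶠ s : ℝ in atTop, Real.log ((1+s)/(c+s)) = Real.log (1+s) - Real.log (c+s) := by
    filter_upwards [eventually_gt_atTop 0] with s hs
    rw [Real.log_div (by positivity) (by positivity)]
  rw [tendsto_congr' this] at hlog
  simpa using hlog.div_const (c-1)

lemma ker_int (c : ℝ) (hc : 0 < c) :
    IntegrableOn (fun s : ℝ => ((c+s)*(1+s))⁻¹) (Ioi 0) := by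
  by_cases hc1 : c = 1
  · subst hc1
    have : ∀ s ∈ Ici (0:ℝ), HasDerivAt (fun s : ℝ => -(1+s)⁻¹) (((1+s)*(1+s))⁻¹) s := by
      intro s hs
      have h1 : (0:ℝ) < 1 + s := by simp at hs; linarith
      have := ((hasDerivAt_id s).const_add (1:ℝ)).inv h1.ne'
      have := this.neg
      refine this.congr_deriv ?_
      simp only [id]
      field_simp
    refine integrableOn_Ioi_deriv_of_nonneg' (l := 0) this (fun x hx => ?_) ?_
    · have : (0:ℝ) < 1 + x := by simp at hx; linarith
      positivity
    · have : Tendsto (fun s:ℝ => -(1+s)⁻¹) atTop (nhds (-0)) := by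
        apply Tendsto.neg
        exact Tendsto.inv_tendsto_atTop (tendsto_atTop_add_const_left _ _ tendsto_id)
      simpa using this
  · refine integrableOn_Ioi_deriv_of_nonneg' (fun s hs => Gderiv c hc hc1 hs) (fun x hx => ?_)
      (Gtend c hc)
    have h1 : (0:ℝ) < 1 + x := by simp at hx; linarith
    have h2 : (0:ℝ) < c + x := by simp at hx; linarith
    positivity

lemma ker_val (c : ℝ) (hc : 0 < c) (hc1 : c ≠ 1) :
    ∫ s in Ioi (0:ℝ), ((c+s)*(1+s))⁻¹ = Real.log c / (c-1) := by
  have := integral_Ioi_of_hasDerivAt_of_nonneg' (g' := fun s => ((c+s)*(1+s))⁻¹)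
    (fun s hs => Gderiv c hc hc1 hs) (fun x hx => by
      have h1 : (0:ℝ) < 1 + x := by simp at hx; linarith
      have h2 : (0:ℝ) < c + x := by simp at hx; linarith
      positivity) (Gtend c hc)
  rw [this]
  simp [Real.log_one]
  ring





lemma gker_contOn {x : ℝ} (hx : 0 < x) : ContinuousOn (fun s => gker x s) (Ioi 0) := by
  intro s hs
  have hs0 : (0:ℝ) < s := hs
  have h1s : (0:ℝ) < 1 + s := by linarith
  have hxs : (0:ℝ) < x + s := by linarith
  apply ContinuousAt.continuousWithinAt
  unfold gker
  have c1 : ContinuousAt (fun s : ℝ => Real.log (x+s)) s := by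
    exact (Real.continuousAt_log hxs.ne').comp (by fun_prop)
  have c2 : ContinuousAt (fun s : ℝ => Real.log (1+s)) s := by
    exact (Real.continuousAt_log h1s.ne').comp (by fun_prop)
  have c3 : ContinuousAt (fun s : ℝ => 2/(s*(1+s))) s := by
    apply ContinuousAt.div continuousAt_const (by fun_prop)
    positivity
  exact c3.mul ((((continuousAt_const.add continuousAt_id).mul (c1.sub c2))).sub
    continuousAt_const)

lemma gker_integrable {x : ℝ} (hx : 0 < x) : IntegrableOn (fun s => gker x s) (Ioi 0) := by
  have hm : 0 < min 1 x := lt_min one_pos hx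
  apply Integrable.mono' ((ker_int (min 1 x) hm).const_mul (2*(x-1)^2/(min 1 x)))
    ((gker_contOn hx).aestronglyMeasurable measurableSet_Ioi)
  filter_upwards [ae_restrict_mem measurableSet_Ioi] with s hs
  exact gker_bound hx hs

lemma gker_hasDerivAt {y s : ℝ} (hy : 0 < y) (hs : 0 < s) :
    HasDerivAt (fun y => gker y s) (2*(y-1)/(y*(y+s)*(1+s))) y := by
  have h1s : (0:ℝ) < 1 + s := by linarith
  have hys : (0:ℝ) < y + s := by linarith
  have d1 : HasDerivAt (fun y : ℝ => Real.log (y+s)) (1/(y+s)) y := by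
    have := ((hasDerivAt_id y).add_const s).log hys.ne'
    simpa using this
  have d2 : HasDerivAt (fun y : ℝ => Real.log y) (1/y) y := by
    simpa using Real.hasDerivAt_log hy.ne'
  have := ((((d1.sub_const (Real.log (1+s))).const_mul (1+s)).sub d2).const_mul
    (2/(s*(1+s))))
  refine this.congr_deriv ?_
  field_simp
  ring

lemma I_hasDerivAt {x : ℝ} (hx : 0 < x) :
    HasDerivAt (fun y => ∫ s in Ioi (0:ℝ), gker y s) (2 * Real.log x / x) x := by
  have hx2 : 0 < x/2 := by linarith
  set C : ℝ := 2*(3*x/2+1)*(2/x) with hC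
  have hball : ∀ y ∈ Metric.ball x (x/2), x/2 < y ∧ y < 3*x/2 := by
    intro y hy
    rw [Metric.mem_ball, Real.dist_eq, abs_sub_lt_iff] at hy
    constructor <;> linarith [hy.1, hy.2]
  have main := hasDerivAt_integral_of_dominated_loc_of_deriv_le (s := Metric.ball x (x/2))
    (μ := volume.restrict (Ioi 0)) (x₀ := x)
    (F := fun y s => gker y s) (F' := fun y s => 2*(y-1)/(y*(y+s)*(1+s)))
    (bound := fun s => C * ((x/2+s)*(1+s))⁻¹) (Metric.ball_mem_nhds x hx2)
    ?_ ((gker_integrable hx)) ?_ ?_ ?_ ?_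
  · -- conclusion
    rcases main with ⟨-, hder⟩
    refine hder.congr_deriv ?_
    symm
    by_cases hx1 : x = 1
    · subst hx1
      simp
    · rw [setIntegral_congr_fun measurableSet_Ioi
        (show EqOn (fun s : ℝ => 2*(x-1)/(x*(x+s)*(1+s)))
          (fun s : ℝ => (2*(x-1)/x) * ((x+s)*(1+s))⁻¹) (Ioi 0) by
          intro s hs
          have hs0 : (0:ℝ) < s := hs
          have : (0:ℝ) < x + s := by linarith
          have : (0:ℝ) < 1 + s := by linarith
          simp only []
          rw [show x*(x+s)*(1+s) = x * ((x+s)*(1+s)) by ring, ← div_div,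
            div_eq_mul_inv (2*(x-1)/x)])]
      rw [MeasureTheory.integral_const_mul, ker_val x hx hx1]
      have : x - 1 ≠ 0 := sub_ne_zero.mpr hx1
      field_simp
  · -- hF_meas
    filter_upwards [IsOpen.mem_nhds isOpen_Ioi hx] with y hy
    exact ((gker_contOn hy).aestronglyMeasurable measurableSet_Ioi)
  · -- hF'_meas
    apply ContinuousOn.aestronglyMeasurable ?_ measurableSet_Ioi
    intro s hs
    have hs0 : (0:ℝ) < s := hs
    have h1 : (0:ℝ) < x + s := by linarith
    have h2 : (0:ℝ) < 1 + s := by linarith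
    apply ContinuousAt.continuousWithinAt
    apply ContinuousAt.div (by fun_prop) (by fun_prop)
    positivity
  · -- h_bound
    filter_upwards [ae_restrict_mem measurableSet_Ioi] with s hs y hy
    have hs0 : (0:ℝ) < s := hs
    have h1s : (0:ℝ) < 1 + s := by linarith
    obtain ⟨hy1, hy2⟩ := hball y hy
    have hy0 : 0 < y := lt_trans hx2 hy1
    have hys : 0 < y + s := by linarith
    rw [Real.norm_eq_abs, abs_div, abs_of_pos (by positivity : (0:ℝ) < y*(y+s)*(1+s))]
    rw [abs_mul, abs_of_pos (by norm_num : (0:ℝ) < 2)]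
    have hnum : |y - 1| ≤ 3*x/2 + 1 := by
      rw [abs_le]; constructor <;> linarith
    have hden : (x/2) * ((x/2+s)*(1+s)) ≤ y*((y+s)*(1+s)) := by
      have : x/2 + s ≤ y + s := by linarith
      have h' : (x/2+s)*(1+s) ≤ (y+s)*(1+s) := by nlinarith
      nlinarith [mul_pos (by positivity : (0:ℝ) < x/2+s) h1s]
    calc 2 * |y-1| / (y*(y+s)*(1+s)) ≤ 2 * (3*x/2+1) / ((x/2) * ((x/2+s)*(1+s))) := by
          apply div_le_div₀ (by positivity) (by linarith [hnum]) (by positivity)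
          · calc y*(y+s)*(1+s) = y*((y+s)*(1+s)) := by ring
              _ ≥ (x/2) * ((x/2+s)*(1+s)) := hden
      _ = C * ((x/2+s)*(1+s))⁻¹ := by
          rw [hC]
          have : (0:ℝ) < (x/2+s)*(1+s) := by positivity
          field_simp
  · -- bound integrable
    exact (ker_int (x/2) hx2).const_mul C
  · -- h_diff
    filter_upwards [ae_restrict_mem measurableSet_Ioi] with s hs y hy
    have hy0 : 0 < y := lt_trans hx2 (hball y hy).1
    exact gker_hasDerivAt hy0 hs




lemma log_sq_hasDerivAt {y : ℝ} (hy : 0 < y) :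
    HasDerivAt (fun y => (Real.log y)^2) (2 * Real.log y / y) y := by
  have := (Real.hasDerivAt_log hy.ne').pow 2
  refine this.congr_deriv ?_
  field_simp
  norm_num

lemma I_eq {x : ℝ} (hx : 0 < x) : ∫ s in Ioi (0:ℝ), gker x s = (Real.log x)^2 := by
  set f : ℝ → ℝ := fun y => (∫ s in Ioi (0:ℝ), gker y s) - (Real.log y)^2 with hf
  set a := min x 1 with ha
  set b := max x 1 with hb
  have ha0 : 0 < a := lt_min hx one_pos
  have hmem : ∀ y ∈ Icc a b, 0 < y := fun y hy => lt_of_lt_of_le ha0 hy.1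
  have hcont : ContinuousOn f (Icc a b) := by
    intro y hy
    have hy0 := hmem y hy
    exact (((I_hasDerivAt hy0).sub (log_sq_hasDerivAt hy0)).continuousAt).continuousWithinAt
  have hderiv : ∀ y ∈ Ico a b, HasDerivWithinAt f 0 (Ici y) y := by
    intro y hy
    have hy0 : 0 < y := lt_of_lt_of_le ha0 hy.1
    have := (I_hasDerivAt hy0).sub (log_sq_hasDerivAt hy0)
    rw [sub_self] at this
    exact this.hasDerivWithinAt
  have hconst := constant_of_has_deriv_right_zero hcont hderiv
  have hx' : x ∈ Icc a b := ⟨min_le_left _ _, le_max_left _ _⟩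
  have h1' : (1:ℝ) ∈ Icc a b := ⟨min_le_right _ _, le_max_right _ _⟩
  have h1 : f 1 = 0 := by
    have : ∀ s, gker 1 s = 0 := by
      intro s; unfold gker; simp
    simp only [hf, this, Real.log_one]
    simp
  have := (hconst x hx').trans (hconst 1 h1').symm
  rw [h1] at this
  have : f x = 0 := this
  simpa [hf, sub_eq_zero] using this

theorem sum_of_squared_logarithms_four
    (a₁ a₂ a₃ a₄ b₁ b₂ b₃ b₄ : ℝ)
    (ha₁ : 0 < a₁) (ha₂ : 0 < a₂) (ha₃ : 0 < a₃) (ha₄ : 0 < a₄)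
    (hb₁ : 0 < b₁) (hb₂ : 0 < b₂) (hb₃ : 0 < b₃) (hb₄ : 0 < b₄)
    (h1 : a₁ + a₂ + a₃ + a₄ ≤ b₁ + b₂ + b₃ + b₄)
    (h2 : a₁ * a₂ + a₁ * a₃ + a₂ * a₃ + a₁ * a₄ + a₂ * a₄ + a₃ * a₄ ≤
          b₁ * b₂ + b₁ * b₃ + b₂ * b₃ + b₁ * b₄ + b₂ * b₄ + b₃ * b₄)
    (h3 : a₁ * a₂ * a₃ + a₁ * a₂ * a₄ + a₂ * a₃ * a₄ + a₁ * a₃ * a₄ ≤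
          b₁ * b₂ * b₃ + b₁ * b₂ * b₄ + b₂ * b₃ * b₄ + b₁ * b₃ * b₄)
    (h4 : a₁ * a₂ * a₃ * a₄ = b₁ * b₂ * b₃ * b₄) :
    (Real.log a₁) ^ 2 + (Real.log a₂) ^ 2 + (Real.log a₃) ^ 2 + (Real.log a₄) ^ 2 ≤
      (Real.log b₁) ^ 2 + (Real.log b₂) ^ 2 + (Real.log b₃) ^ 2 + (Real.log b₄) ^ 2 := by
  have hq : Real.log a₁ + Real.log a₂ + Real.log a₃ + Real.log a₄ =
      Real.log b₁ + Real.log b₂ + Real.log b₃ + Real.log b₄ := by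
    rw [← Real.log_mul (by positivity) (by positivity),
        ← Real.log_mul (by positivity) (by positivity),
        ← Real.log_mul (by positivity) (by positivity),
        ← Real.log_mul (by positivity) (by positivity),
        ← Real.log_mul (by positivity) (by positivity),
        ← Real.log_mul (by positivity) (by positivity), h4]
  have key : ∀ s ∈ Ioi (0:ℝ),
      gker a₁ s + gker a₂ s + gker a₃ s + gker a₄ s ≤
      gker b₁ s + gker b₂ s + gker b₃ s + gker b₄ s := by
    intro s hs
    have hs0 : (0:ℝ) < s := hs
    have h1s : (0:ℝ) < 1 + s := by linarith
    have hpoly : (a₁+s)*(a₂+s)*(a₃+s)*(a₄+s) ≤ (b₁+s)*(b₂+s)*(b₃+s)*(b₄+s) := by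
      nlinarith [mul_le_mul_of_nonneg_right h1 (by positivity : (0:ℝ) ≤ s^3),
        mul_le_mul_of_nonneg_right h2 (by positivity : (0:ℝ) ≤ s^2),
        mul_le_mul_of_nonneg_right h3 hs0.le, h4]
    have hlogp : Real.log (a₁+s) + Real.log (a₂+s) + Real.log (a₃+s) + Real.log (a₄+s) ≤
        Real.log (b₁+s) + Real.log (b₂+s) + Real.log (b₃+s) + Real.log (b₄+s) := by
      have e1 : Real.log (a₁+s) + Real.log (a₂+s) + Real.log (a₃+s) + Real.log (a₄+s)
          = Real.log ((a₁+s)*(a₂+s)*(a₃+s)*(a₄+s)) := by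
        rw [Real.log_mul (by positivity) (by positivity),
            Real.log_mul (by positivity) (by positivity),
            Real.log_mul (by positivity) (by positivity)]
      have e2 : Real.log (b₁+s) + Real.log (b₂+s) + Real.log (b₃+s) + Real.log (b₄+s)
          = Real.log ((b₁+s)*(b₂+s)*(b₃+s)*(b₄+s)) := by
        rw [Real.log_mul (by positivity) (by positivity),
            Real.log_mul (by positivity) (by positivity),
            Real.log_mul (by positivity) (by positivity)]
      rw [e1, e2]
      exact Real.log_le_log (by positivity) hpoly
    have hdiff : (gker b₁ s + gker b₂ s + gker b₃ s + gker b₄ s) -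
        (gker a₁ s + gker a₂ s + gker a₃ s + gker a₄ s) =
        (2/(s*(1+s))) * ((1+s) *
          ((Real.log (b₁+s) + Real.log (b₂+s) + Real.log (b₃+s) + Real.log (b₄+s)) -
           (Real.log (a₁+s) + Real.log (a₂+s) + Real.log (a₃+s) + Real.log (a₄+s)))) := by
      unfold gker
      linear_combination (2/(s*(1+s))) * hq
    have hnn : 0 ≤ (2/(s*(1+s))) * ((1+s) *
          ((Real.log (b₁+s) + Real.log (b₂+s) + Real.log (b₃+s) + Real.log (b₄+s)) -
           (Real.log (a₁+s) + Real.log (a₂+s) + Real.log (a₃+s) + Real.log (a₄+s)))) :=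
      mul_nonneg (by positivity) (mul_nonneg h1s.le (sub_nonneg.mpr hlogp))
    linarith [hdiff, hnn]
  have iA₁ := gker_integrable ha₁
  have iA₂ := gker_integrable ha₂
  have iA₃ := gker_integrable ha₃
  have iA₄ := gker_integrable ha₄
  have iB₁ := gker_integrable hb₁
  have iB₂ := gker_integrable hb₂
  have iB₃ := gker_integrable hb₃
  have iB₄ := gker_integrable hb₄
  have splitA := integral_add (μ := volume.restrict (Ioi 0)) ((iA₁.add iA₂).add iA₃) iA₄
  have splitA2 := integral_add (μ := volume.restrict (Ioi 0)) (iA₁.add iA₂) iA₃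
  have splitA3 := integral_add (μ := volume.restrict (Ioi 0)) iA₁ iA₂
  have splitB := integral_add (μ := volume.restrict (Ioi 0)) ((iB₁.add iB₂).add iB₃) iB₄
  have splitB2 := integral_add (μ := volume.restrict (Ioi 0)) (iB₁.add iB₂) iB₃
  have splitB3 := integral_add (μ := volume.restrict (Ioi 0)) iB₁ iB₂
  simp only [Pi.add_apply] at splitA splitA2 splitA3 splitB splitB2 splitB3
  have hIA : (Real.log a₁)^2 + (Real.log a₂)^2 + (Real.log a₃)^2 + (Real.log a₄)^2 =
      ∫ s in Ioi (0:ℝ), (gker a₁ s + gker a₂ s + gker a₃ s + gker a₄ s) := by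
    rw [splitA, splitA2, splitA3, I_eq ha₁, I_eq ha₂, I_eq ha₃, I_eq ha₄]
  have hIB : (Real.log b₁)^2 + (Real.log b₂)^2 + (Real.log b₃)^2 + (Real.log b₄)^2 =
      ∫ s in Ioi (0:ℝ), (gker b₁ s + gker b₂ s + gker b₃ s + gker b₄ s) := by
    rw [splitB, splitB2, splitB3, I_eq hb₁, I_eq hb₂, I_eq hb₃, I_eq hb₄]
  rw [hIA, hIB]
  exact setIntegral_mono_on (((iA₁.add iA₂).add iA₃).add iA₄)
    (((iB₁.add iB₂).add iB₃).add iB₄) measurableSet_Ioi key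
end

section
/- Let n ≥ 2 and set a = (1/n, 1/n, …, 1/n) ∈ (0,∞)^n and b = (1, 1, …, 1) ∈ (0,∞)^n. Then E_k(a) ≤ E_k(b) for every k ∈ {0, 1, …, n−1} (in particular a_1⋯a_n ≤ b_1⋯b_n), yet (log a_1)^2 + … + (log a_n)^2 = n·(log n)^2 > 0 = (log b_1)^2 + … + (log b_n)^2. In particular, the sum of squared logarithms inequality fails if the equality constraint on the product is weakened to an inequality. -/
/-- Reversed elementary symmetric polynomials:
`E n k y = e_{n-k}(y₁,…,yₙ)`, the sum of all products of `n - k` of the coordinates. -/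
def E (n k : ℕ) (y : Fin n → ℝ) : ℝ :=
  ∑ t ∈ (Finset.univ : Finset (Fin n)).powersetCard (n - k), ∏ i ∈ t, y i

theorem log_sq_inequality_fails_for_weaker_constraint (n : ℕ) (hn : 2 ≤ n) :
    (∀ k < n, E n k (fun _ : Fin n => (1 : ℝ) / n) ≤ E n k (fun _ : Fin n => (1 : ℝ))) ∧
    (∑ _i : Fin n, (Real.log ((1 : ℝ) / n)) ^ 2 = (n : ℝ) * (Real.log n) ^ 2) ∧
    (0 : ℝ) < (n : ℝ) * (Real.log n) ^ 2 ∧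
    (∑ _i : Fin n, (Real.log (1 : ℝ)) ^ 2 = 0) := by
  have hn0 : (0 : ℝ) < n := by positivity
  have hn1 : (1 : ℝ) < n := by exact_mod_cast lt_of_lt_of_le one_lt_two (by exact_mod_cast hn)
  refine ⟨?_, ?_, ?_, ?_⟩
  · intro k _
    unfold E
    apply Finset.sum_le_sum
    intro t _
    calc ∏ i ∈ t, (1 : ℝ) / n ≤ ∏ i ∈ t, (1 : ℝ) := by
          apply Finset.prod_le_prod
          · intro i _; positivity
          · intro i _
            rw [div_le_one hn0]
            exact hn1.le
      _ = ∏ i ∈ t, (fun _ : Fin n => (1 : ℝ)) i := by simp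
  · rw [Finset.sum_const, Finset.card_univ, Fintype.card_fin, one_div,
      Real.log_inv, neg_sq, nsmul_eq_mul]
  · have : 0 < Real.log n := Real.log_pos hn1
    positivity
  · simp
end

section
/- Let n ≥ 2, let I ⊆ ℝ be an open interval, let k ∈ {0,1,…,n−1}, and let f ∈ C^n(I) satisfy (−1)^{n+k}(x^k f'(x))^{(n−1)} ≤ 0 for all x ∈ I. Then for any pairwise distinct points y_1, y_2, …, y_n ∈ I one has Σ_{i=1}^n f'(y_i)·(−y_i)^k / ∏_{j≠i}(y_j − y_i) ≥ 0. -/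
open Finset Polynomial Set

private lemma polyeval_contDiff (p : Polynomial ℝ) (N : ℕ) :
    ContDiff ℝ N (fun x : ℝ => p.eval x) := by
  induction p using Polynomial.induction_on' with
  | add p q hp hq => simpa [Polynomial.eval_add] using hp.add hq
  | monomial i a =>
      simpa [Polynomial.eval_monomial] using (contDiff_const (c := a)).mul (contDiff_id.pow i)

private lemma iteratedDeriv_polyeval (m : ℕ) (p : Polynomial ℝ) :
    iteratedDeriv m (fun x : ℝ => p.eval x) = fun x => (Polynomial.derivative^[m] p).eval x := by
  induction m generalizing p with
  | zero => simp
  | succ m ih =>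
      have hd : _root_.deriv (fun x : ℝ => p.eval x) = fun x => p.derivative.eval x :=
        funext fun _ => Polynomial.deriv _
      rw [iteratedDeriv_succ', hd, ih, Function.iterate_succ_apply]

private lemma genRolle (s : Set ℝ) (hs : IsOpen s) (hconn : s.OrdConnected) :
    ∀ (m : ℕ) (h : ℝ → ℝ), ContDiffOn ℝ m h s →
    ∀ x : Fin (m + 1) → ℝ, StrictMono x → (∀ i, x i ∈ s) → (∀ i, h (x i) = 0) →
    ∃ ξ ∈ s, iteratedDeriv m h ξ = 0 := by
  intro m
  induction m with
  | zero =>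
      intro h _ x _ hxs hz
      exact ⟨x 0, hxs 0, by simpa using hz 0⟩
  | succ m ih =>
      intro h hh x hx hxs hz
      have key : ∀ i : Fin (m + 1), ∃ c ∈ Ioo (x i.castSucc) (x i.succ), deriv h c = 0 := by
        intro i
        have hab : x i.castSucc < x i.succ := hx Fin.castSucc_lt_succ
        have hsub : Icc (x i.castSucc) (x i.succ) ⊆ s := hconn.out (hxs _) (hxs _)
        exact exists_deriv_eq_zero hab (hh.continuousOn.mono hsub) ((hz _).trans (hz _).symm)
      choose z hz1 hz2 using key
      have hzs : ∀ i, z i ∈ s := fun i =>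
        hconn.out (hxs i.castSucc) (hxs i.succ) ⟨(hz1 i).1.le, (hz1 i).2.le⟩
      have hzmono : StrictMono z := by
        intro i j hij
        have hij' : (i : ℕ) < (j : ℕ) := hij
        calc z i < x i.succ := (hz1 i).2
          _ ≤ x j.castSucc := hx.monotone (by rw [Fin.le_def]; simp; omega)
          _ < z j := (hz1 j).1
      obtain ⟨ξ, hξ, hξ0⟩ := ih (deriv h)
        (hh.deriv_of_isOpen hs (by exact_mod_cast le_rfl)) z hzmono hzs hz2
      exact ⟨ξ, hξ, by rwa [iteratedDeriv_succ']⟩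

private lemma coeff_interp {n : ℕ} (v : Fin n → ℝ) (hv : Function.Injective v)
    (r : Fin n → ℝ) :
    (Lagrange.interpolate Finset.univ v r).coeff (n - 1) =
      ∑ i, r i * (∏ j ∈ Finset.univ.erase i, (v i - v j))⁻¹ := by
  rw [Lagrange.interpolate_apply, Polynomial.finset_sum_coeff]
  refine Finset.sum_congr rfl fun i _ => ?_
  rw [Polynomial.coeff_C_mul]
  congr 1
  have hinj : Set.InjOn v (Finset.univ : Finset (Fin n)) := hv.injOn
  have hdeg : (Lagrange.basis Finset.univ v i).natDegree = n - 1 := by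
    rw [Lagrange.natDegree_basis hinj (Finset.mem_univ i), Finset.card_univ, Fintype.card_fin]
  have hlc : (Lagrange.basis Finset.univ v i).coeff (n - 1) =
      (Lagrange.basis Finset.univ v i).leadingCoeff := by
    rw [Polynomial.leadingCoeff, hdeg]
  rw [hlc, Lagrange.basis, Polynomial.leadingCoeff_prod, ← Finset.prod_inv_distrib]
  refine Finset.prod_congr rfl fun j hj => ?_
  rw [Lagrange.basisDivisor, Polynomial.leadingCoeff_mul, Polynomial.leadingCoeff_C,
    (monic_X_sub_C (v j)).leadingCoeff, mul_one]

theorem key_sum_nonneg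
    (n : ℕ) (hn : 2 ≤ n) (I : Set ℝ) (hIopen : IsOpen I) (hIconn : I.OrdConnected)
    (k : ℕ) (hk : k < n) (f : ℝ → ℝ) (hf : ContDiffOn ℝ n f I)
    (hder : ∀ x ∈ I, (-1 : ℝ) ^ (n + k) *
      iteratedDerivWithin (n - 1) (fun z => z ^ k * derivWithin f I z) I x ≤ 0)
    (y : Fin n → ℝ) (hyI : ∀ i, y i ∈ I) (hinj : Function.Injective y) :
    0 ≤ ∑ i, derivWithin f I (y i) * (-(y i)) ^ k /
      ∏ j ∈ Finset.univ.erase i, (y j - y i) := by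
  obtain ⟨m, rfl⟩ : ∃ m, n = m + 1 := ⟨n - 1, by omega⟩
  have hm1 : 1 ≤ m := by omega
  have hUD : UniqueDiffOn ℝ I := hIopen.uniqueDiffOn
  set g : ℝ → ℝ := fun z => z ^ k * derivWithin f I z with hg
  have hgC : ContDiffOn ℝ m g I := by
    have h1 : ContDiffOn ℝ m (derivWithin f I) I :=
      hf.derivWithin hUD (by exact_mod_cast le_rfl)
    exact ((contDiff_id.pow k).contDiffOn).mul h1
  set P : Polynomial ℝ := Lagrange.interpolate Finset.univ y (fun i => g (y i)) with hP
  have hPC : ContDiffOn ℝ m (fun z => P.eval z) I := (polyeval_contDiff P m).contDiffOn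
  set h : ℝ → ℝ := fun z => g z - P.eval z with hh
  have hhC : ContDiffOn ℝ m h I := hgC.sub hPC
  -- Rolle points
  set σ := Tuple.sort y with hσ
  have hxmono : StrictMono (y ∘ σ) :=
    (Tuple.monotone_sort y).strictMono_of_injective (hinj.comp σ.injective)
  have hzero : ∀ i : Fin (m + 1), h ((y ∘ σ) i) = 0 := by
    intro i
    have := Lagrange.eval_interpolate_at_node (fun i => g (y i)) hinj.injOn
      (Finset.mem_univ (σ i))
    simp only [hh, Function.comp_apply]
    rw [← hP] at this
    rw [this, sub_self]
  obtain ⟨ξ, hξI, hξ0⟩ := genRolle I hIopen hIconn m h hhC (y ∘ σ) hxmono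
    (fun i => hyI (σ i)) hzero
  -- bridge within/global
  have bridge : ∀ (F : ℝ → ℝ), iteratedDerivWithin m F I ξ = iteratedDeriv m F ξ := by
    intro F
    rw [iteratedDerivWithin_eq_iteratedFDerivWithin, iteratedDeriv_eq_iteratedFDeriv,
      iteratedFDerivWithin_of_isOpen m hIopen hξI]
  -- the divided difference
  set c : ℝ := ∑ i, g (y i) * (∏ j ∈ Finset.univ.erase i, (y i - y j))⁻¹ with hc
  have hcoeff : P.coeff m = c := by
    have := coeff_interp y hinj (fun i => g (y i))
    simp only [Nat.add_sub_cancel] at this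
    exact this
  -- compute iterated derivative of P
  have hdegP : P.natDegree ≤ m := by
    have := Lagrange.degree_interpolate_le (s := Finset.univ) (v := y)
      (fun i => g (y i)) hinj.injOn
    rw [← hP] at this
    simp only [Finset.card_univ, Fintype.card_fin, Nat.add_sub_cancel] at this
    exact Polynomial.natDegree_le_iff_degree_le.mpr this
  have hQ : (Polynomial.derivative^[m] P).eval ξ = (m.factorial : ℝ) * c := by
    have hQdeg : (Polynomial.derivative^[m] P).natDegree = 0 := by
      have := Polynomial.natDegree_iterate_derivative P m
      omega
    rw [Polynomial.eq_C_of_natDegree_le_zero hQdeg.le, Polynomial.eval_C,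
      Polynomial.coeff_iterate_derivative, zero_add, Nat.descFactorial_self, hcoeff,
      nsmul_eq_mul]
  have hgval : iteratedDerivWithin m g I ξ = (m.factorial : ℝ) * c := by
    have hsplit : iteratedDerivWithin m h I ξ =
        iteratedDerivWithin m g I ξ - iteratedDerivWithin m (fun z => P.eval z) I ξ := by
      have := iteratedDerivWithin_sub hξI hUD (hgC ξ hξI) (hPC ξ hξI)
      exact this
    have h0 : iteratedDerivWithin m h I ξ = 0 := by rw [bridge]; exact hξ0
    have hPval : iteratedDerivWithin m (fun z => P.eval z) I ξ = (m.factorial : ℝ) * c := by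
      rw [bridge, iteratedDeriv_polyeval]
      exact hQ
    rw [hsplit, hPval] at h0
    linarith
  -- sign from hypothesis
  have hsign := hder ξ hξI
  rw [Nat.add_sub_cancel] at hsign
  rw [hgval] at hsign
  have hfac : (0 : ℝ) < (m.factorial : ℝ) := by exact_mod_cast m.factorial_pos
  have hec : 0 ≤ (-1 : ℝ) ^ (m + k) * c := by
    have h1 : (-1 : ℝ) ^ (m + 1 + k) = -(-1 : ℝ) ^ (m + k) := by
      rw [show m + 1 + k = m + k + 1 by omega, pow_succ]; ring
    rw [h1] at hsign
    nlinarith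
  -- rewrite the target sum
  have hterm : ∀ i : Fin (m + 1),
      derivWithin f I (y i) * (-(y i)) ^ k / ∏ j ∈ Finset.univ.erase i, (y j - y i)
        = (-1 : ℝ) ^ (m + k) *
          (g (y i) * (∏ j ∈ Finset.univ.erase i, (y i - y j))⁻¹) := by
    intro i
    have hcard : (Finset.univ.erase i).card = m := by
      rw [Finset.card_erase_of_mem (Finset.mem_univ i), Finset.card_univ, Fintype.card_fin]
      omega
    have hprod : ∏ j ∈ Finset.univ.erase i, (y j - y i)
        = (-1 : ℝ) ^ m * ∏ j ∈ Finset.univ.erase i, (y i - y j) := by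
      calc ∏ j ∈ Finset.univ.erase i, (y j - y i)
          = ∏ j ∈ Finset.univ.erase i, (-1 : ℝ) * (y i - y j) :=
            Finset.prod_congr rfl fun j _ => by ring
        _ = (-1 : ℝ) ^ m * ∏ j ∈ Finset.univ.erase i, (y i - y j) := by
            rw [Finset.prod_mul_distrib, Finset.prod_const, hcard]
    have hinv : ((-1 : ℝ) ^ m)⁻¹ = (-1 : ℝ) ^ m := by
      rw [← inv_pow, inv_neg, inv_one]
    rw [div_eq_mul_inv, hprod, mul_inv, hinv, neg_pow, pow_add]
    simp only [hg]
    ring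
  calc (0 : ℝ) ≤ (-1 : ℝ) ^ (m + k) * c := hec
    _ = ∑ i, derivWithin f I (y i) * (-(y i)) ^ k /
        ∏ j ∈ Finset.univ.erase i, (y j - y i) := by
        rw [hc, Finset.mul_sum]
        exact (Finset.sum_congr rfl fun i _ => (hterm i)).symm
end

section
/- Let n ≥ 2, let J ⊆ ℝ be an open interval, let k ∈ {0,1,…,n−1}, and let f ∈ C^n(J) satisfy (−1)^{n+k}(x^k f'(x))^{(n−1)} > 0 for all x ∈ J. Then for any pairwise distinct points y_1, y_2, …, y_n ∈ J one has Σ_{i=1}^n f'(y_i)·(−y_i)^k / ∏_{j≠i}(y_j − y_i) < 0. -/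
open Polynomial Finset Set Nat

private lemma myContDiff_eval (p : Polynomial ℝ) {n : WithTop ℕ∞} :
    ContDiff ℝ n fun x : ℝ => p.eval x := by
  induction p using Polynomial.induction_on' with
  | add p q hp hq => simpa [Polynomial.eval_add] using hp.add hq
  | monomial m a =>
      simpa [Polynomial.eval_monomial] using (contDiff_const (c := a)).mul (contDiff_id.pow m)

private lemma myIDW_of_isOpen {f : ℝ → ℝ} {s : Set ℝ} {x : ℝ} (n : ℕ)
    (hs : IsOpen s) (hx : x ∈ s) : iteratedDerivWithin n f s x = iteratedDeriv n f x := by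
  rw [iteratedDerivWithin_eq_iteratedFDerivWithin, iteratedDeriv_eq_iteratedFDeriv,
    iteratedFDerivWithin_of_isOpen n hs hx]

private lemma myIteratedDeriv_eval (p : Polynomial ℝ) (m : ℕ) (x : ℝ) :
    iteratedDeriv m (fun y : ℝ => p.eval y) x = (derivative^[m] p).eval x := by
  induction m generalizing p with
  | zero => simp
  | succ m ih =>
      rw [iteratedDeriv_succ']
      have hd : deriv (fun y : ℝ => p.eval y) = fun y => p.derivative.eval y := by
        funext y; exact Polynomial.deriv (p := p)
      rw [hd, ih, Function.iterate_succ_apply]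

private lemma myIterated_rolle (J : Set ℝ) (hJopen : IsOpen J) (hJconn : J.OrdConnected) :
    ∀ (m : ℕ) (h : ℝ → ℝ), ContDiffOn ℝ m h J → ∀ x : Fin (m + 1) → ℝ, StrictMono x →
      (∀ i, x i ∈ J) → (∀ i, h (x i) = 0) → ∃ ξ ∈ J, iteratedDeriv m h ξ = 0 := by
  intro m
  induction m with
  | zero =>
      intro h _ x _ hxJ hx0
      exact ⟨x 0, hxJ 0, by simpa [iteratedDeriv_zero] using hx0 0⟩
  | succ m ih =>
      intro h hh x hxm hxJ hx0
      have key : ∀ i : Fin (m + 1), ∃ c ∈ Set.Ioo (x i.castSucc) (x i.succ), deriv h c = 0 := by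
        intro i
        have hlt : x i.castSucc < x i.succ := hxm (Fin.castSucc_lt_succ (i := i))
        have hIcc : Set.Icc (x i.castSucc) (x i.succ) ⊆ J := hJconn.out (hxJ _) (hxJ _)
        exact exists_deriv_eq_zero hlt (hh.continuousOn.mono hIcc)
          ((hx0 _).trans (hx0 _).symm)
      choose z hz hz0 using key
      have hzJ : ∀ i, z i ∈ J := fun i =>
        hJconn.out (hxJ i.castSucc) (hxJ i.succ) ⟨(hz i).1.le, (hz i).2.le⟩
      have hzm : StrictMono z := by
        intro i j hij
        calc z i < x i.succ := (hz i).2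
          _ ≤ x j.castSucc := hxm.monotone (by
              rw [Fin.le_def]
              simp only [Fin.val_succ, Fin.coe_castSucc]
              rw [Fin.lt_def] at hij
              omega)
          _ < z j := (hz j).1
      have hdh : ContDiffOn ℝ m (deriv h) J := by
        apply hh.deriv_of_isOpen hJopen
        exact_mod_cast le_rfl
      obtain ⟨ξ, hξJ, hξ⟩ := ih (deriv h) hdh z hzm hzJ hz0
      exact ⟨ξ, hξJ, by rw [iteratedDeriv_succ']; exact hξ⟩

private lemma myDivdiff_mv (m : ℕ) (J : Set ℝ) (hJopen : IsOpen J) (hJconn : J.OrdConnected)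
    (g : ℝ → ℝ) (hg : ContDiffOn ℝ m g J) (y : Fin (m + 1) → ℝ) (hyJ : ∀ i, y i ∈ J)
    (hinj : Function.Injective y) :
    ∃ ξ ∈ J, iteratedDeriv m g ξ =
      m ! * ∑ i, g (y i) * ∏ j ∈ Finset.univ.erase i, (y i - y j)⁻¹ := by
  classical
  have hvs : Set.InjOn y (Finset.univ : Finset (Fin (m + 1))) := hinj.injOn
  set P : Polynomial ℝ := Lagrange.interpolate Finset.univ y (g ∘ y) with hP
  set h : ℝ → ℝ := fun x => g x - P.eval x with hh
  have hzero : ∀ i, h (y i) = 0 := by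
    intro i
    simp only [hh]
    rw [hP, Lagrange.eval_interpolate_at_node (g ∘ y) hvs (Finset.mem_univ i)]
    simp
  have hPC : ContDiffOn ℝ m (fun x : ℝ => P.eval x) J := (myContDiff_eval P).contDiffOn
  have hhC : ContDiffOn ℝ m h J := hg.sub hPC
  let σ := Tuple.sort y
  have hmono : StrictMono (y ∘ σ) :=
    (Tuple.monotone_sort y).strictMono_of_injective (hinj.comp σ.injective)
  obtain ⟨ξ, hξJ, hξ⟩ := myIterated_rolle J hJopen hJconn m h hhC (y ∘ σ) hmono
      (fun i => hyJ _) (fun i => hzero _)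
  -- split the iterated derivative
  have hsub : iteratedDerivWithin m h J ξ = iteratedDerivWithin m g J ξ -
      iteratedDerivWithin m (fun x : ℝ => P.eval x) J ξ := by
    have := iteratedDerivWithin_sub (hx := hξJ) (h := hJopen.uniqueDiffOn) (hg ξ hξJ) (hPC ξ hξJ)
    simpa [hh, Pi.sub_def] using this
  rw [myIDW_of_isOpen m hJopen hξJ, myIDW_of_isOpen m hJopen hξJ,
    myIDW_of_isOpen m hJopen hξJ, hξ] at hsub
  -- natDegree bound
  have hPdeg : P.natDegree ≤ m := by
    rcases eq_or_ne P 0 with h0 | h0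
    · simp [h0]
    · have hlt : P.degree < ((m + 1 : ℕ) : WithBot ℕ) := by
        have := Lagrange.degree_interpolate_lt (r := g ∘ y) hvs
        simpa [hP] using this
      have := (Polynomial.natDegree_lt_iff_degree_lt h0).2 hlt
      omega
  -- iterated derivative of the polynomial
  have hiterP : iteratedDeriv m (fun x : ℝ => P.eval x) ξ = m ! * P.coeff m := by
    rw [myIteratedDeriv_eval]
    have hq : derivative^[m] P = Polynomial.C ((derivative^[m] P).coeff 0) := by
      apply Polynomial.eq_C_of_natDegree_le_zero
      have := Polynomial.natDegree_iterate_derivative P m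
      omega
    rw [hq, Polynomial.eval_C, Polynomial.coeff_iterate_derivative]
    simp [Nat.descFactorial_self, nsmul_eq_mul]
  -- leading coefficient of the interpolation polynomial
  have hcoeff : P.coeff m = ∑ i, g (y i) * ∏ j ∈ Finset.univ.erase i, (y i - y j)⁻¹ := by
    rw [hP, Lagrange.interpolate_apply, Polynomial.finset_sum_coeff]
    refine Finset.sum_congr rfl fun i _ => ?_
    rw [Polynomial.coeff_C_mul]
    congr 1
    have hdeg : (Lagrange.basis Finset.univ y i).natDegree = m := by
      rw [Lagrange.natDegree_basis hvs (Finset.mem_univ i)]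
      simp
    have hlc : (Lagrange.basis Finset.univ y i).coeff m =
        (Lagrange.basis Finset.univ y i).leadingCoeff := by
      rw [Polynomial.leadingCoeff, hdeg]
    rw [hlc, Lagrange.basis, Polynomial.leadingCoeff_prod]
    refine Finset.prod_congr rfl fun j hj => ?_
    rw [Lagrange.basisDivisor, Polynomial.leadingCoeff_mul, Polynomial.leadingCoeff_C,
      (Polynomial.monic_X_sub_C (y j)).leadingCoeff, mul_one]
  refine ⟨ξ, hξJ, ?_⟩
  rw [← hcoeff, ← hiterP]
  linarith [hsub]

theorem key_sum_neg
    (n : ℕ) (hn : 2 ≤ n) (J : Set ℝ) (hJopen : IsOpen J) (hJconn : J.OrdConnected)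
    (k : ℕ) (hk : k < n) (f : ℝ → ℝ) (hf : ContDiffOn ℝ n f J)
    (hder : ∀ x ∈ J, 0 < (-1 : ℝ) ^ (n + k) *
      iteratedDerivWithin (n - 1) (fun z => z ^ k * derivWithin f J z) J x)
    (y : Fin n → ℝ) (hyJ : ∀ i, y i ∈ J) (hinj : Function.Injective y) :
    ∑ i, derivWithin f J (y i) * (-(y i)) ^ k /
      ∏ j ∈ Finset.univ.erase i, (y j - y i) < 0 := by
  classical
  obtain ⟨m, rfl⟩ : ∃ m, n = m + 1 := ⟨n - 1, by omega⟩
  set g : ℝ → ℝ := fun z => z ^ k * derivWithin f J z with hg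
  have hgC : ContDiffOn ℝ m g J := by
    have hd : ContDiffOn ℝ m (deriv f) J := by
      apply hf.deriv_of_isOpen hJopen
      exact_mod_cast le_rfl
    have hmain : ContDiffOn ℝ m (fun z : ℝ => z ^ k * deriv f z) J :=
      ((contDiff_id.pow k).contDiffOn).mul hd
    exact hmain.congr fun x hx => by
      simp only [hg]; rw [derivWithin_of_isOpen hJopen hx]
  obtain ⟨ξ, hξJ, hξ⟩ := myDivdiff_mv m J hJopen hJconn g hgC y hyJ hinj
  have hpos := hder ξ hξJ
  have hm1 : (m + 1) - 1 = m := by omega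
  rw [hm1] at hpos
  rw [myIDW_of_isOpen m hJopen hξJ, hξ] at hpos
  set S := ∑ i, g (y i) * ∏ j ∈ Finset.univ.erase i, (y i - y j)⁻¹ with hS
  have hfac : (0 : ℝ) < m ! := by positivity
  have hSsign : 0 < (-1 : ℝ) ^ (m + 1 + k) * S := by
    rw [show (-1 : ℝ) ^ (m + 1 + k) * ((m ! : ℝ) * S)
        = (m ! : ℝ) * ((-1 : ℝ) ^ (m + 1 + k) * S) by ring] at hpos
    nlinarith [hpos, hfac]
  have hT : (∑ i, derivWithin f J (y i) * (-(y i)) ^ k /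
      ∏ j ∈ Finset.univ.erase i, (y j - y i)) = (-1 : ℝ) ^ (m + k) * S := by
    rw [hS, Finset.mul_sum]
    refine Finset.sum_congr rfl fun i _ => ?_
    have hcard : (Finset.univ.erase i).card = m := by
      simp [Finset.card_erase_of_mem]
    have hprod : ∏ j ∈ Finset.univ.erase i, (y j - y i) =
        (-1 : ℝ) ^ m * ∏ j ∈ Finset.univ.erase i, (y i - y j) := by
      calc ∏ j ∈ Finset.univ.erase i, (y j - y i)
          = ∏ j ∈ Finset.univ.erase i, (-1 : ℝ) * (y i - y j) :=
            Finset.prod_congr rfl fun j _ => by ring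
        _ = (-1 : ℝ) ^ (Finset.univ.erase i).card *
            ∏ j ∈ Finset.univ.erase i, (y i - y j) := by
            rw [Finset.prod_mul_distrib, Finset.prod_const]
        _ = (-1 : ℝ) ^ m * ∏ j ∈ Finset.univ.erase i, (y i - y j) := by rw [hcard]
    have hinv : ((-1 : ℝ) ^ m)⁻¹ = (-1 : ℝ) ^ m := by
      rw [← inv_pow, inv_neg, inv_one]
    rw [hprod, neg_pow, div_eq_mul_inv, mul_inv, ← Finset.prod_inv_distrib, hinv, pow_add]
    have hgv : g (y i) = y i ^ k * derivWithin f J (y i) := rfl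
    rw [hgv]
    ring
  rw [hT]
  have hflip : (-1 : ℝ) ^ (m + 1 + k) = -((-1 : ℝ) ^ (m + k)) := by
    rw [show m + 1 + k = (m + k) + 1 by ring, pow_succ]
    ring
  rw [hflip] at hSsign
  linarith
end

section
/- Let 0 < a_1 < a_2 and A_1 > 0, A_2 > 0, and define the quartic polynomial Q(x) = (x+a_1)(x+a_2)^3 + A_1·x + A_2·x^2. Then Q does not have four real roots counted with multiplicity; equivalently, Q has at least one non-real complex root. -/
set_option maxHeartbeats 1000000

open Polynomial


lemma crux (a2 d u : ℝ) (hd : 0 < d) (hda : d < a2) (hu : -(d/2) ≤ u) :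
    a2^3*(a2-d) + (a2+u/2)^2 * (d^2/2 - u*(d+u))/2 ≤ (a2+u/2)^2*(a2+(-d-u)/2)^2 := by
  have hb : 0 ≤ 3/16*u^2 + (d+2*a2)/4*u + 3/4*(a2*d) := by
    nlinarith [sq_nonneg u, mul_nonneg (by linarith : (0:ℝ) ≤ u + d/2) (by linarith : (0:ℝ) ≤ d + 2*a2), mul_pos hd (hd.trans hda), mul_pos hd hd]
  nlinarith [mul_nonneg (sq_nonneg u) hb]

lemma combine (X Y P R M T : ℝ) (hX : 0 < X) (hXY : Y ≤ X) (hP : 0 ≤ P) (hR : 0 ≤ R)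
    (hPR : P + R < M) (hcrux : T + X*M ≤ X*Y) : T < (X-P)*(Y-R) := by
  nlinarith [mul_lt_mul_of_pos_left hPR hX, mul_nonneg hP (sub_nonneg.2 hXY), mul_nonneg hP hR]

lemma half (a1 a2 t1 t2 t3 t4 : ℝ) (h0 : 0 < a1) (h1 : a1 < a2)
    (hs : t1+t2+t3+t4 = a1-a2) (hq : t1^2+t2^2+t3^2+t4^2 < (a2-a1)^2)
    (huv : t3+t4 ≤ t1+t2) :
    a1*a2^3 < (a2+t1)*(a2+t2)*(a2+t3)*(a2+t4) := by
  have hd : 0 < a2 - a1 := by linarith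
  have hda : a2 - a1 < a2 := by linarith
  have hu : -((a2-a1)/2) ≤ t1+t2 := by linarith
  have hY : (0:ℝ) < a2 + (t3+t4)/2 := by nlinarith [sq_nonneg (t3-t4), sq_nonneg t1, sq_nonneg t2]
  have hX : (0:ℝ) < a2 + (t1+t2)/2 := by linarith
  have h34 : -(a2-a1)-(t1+t2) = t3+t4 := by linarith
  have hcrux := crux a2 (a2-a1) (t1+t2) hd hda hu
  rw [h34] at hcrux
  have hX2 : (0:ℝ) < (a2+(t1+t2)/2)^2 := by positivity
  have hXYsq : (a2+(t3+t4)/2)^2 ≤ (a2+(t1+t2)/2)^2 := by nlinarith [hY, hX, huv]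
  have hPR : ((t1-t2)/2)^2 + ((t3-t4)/2)^2 < ((a2-a1)^2/2 - (t1+t2)*((a2-a1)+(t1+t2)))/2 := by
    nlinarith [hq, hs]
  have hcrux' : a1*a2^3 + (a2+(t1+t2)/2)^2 * (((a2-a1)^2/2 - (t1+t2)*((a2-a1)+(t1+t2)))/2)
      ≤ (a2+(t1+t2)/2)^2 * (a2+(t3+t4)/2)^2 := by linarith [hcrux]
  have := combine ((a2+(t1+t2)/2)^2) ((a2+(t3+t4)/2)^2) (((t1-t2)/2)^2) (((t3-t4)/2)^2)
      (((a2-a1)^2/2 - (t1+t2)*((a2-a1)+(t1+t2)))/2) (a1*a2^3)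
      hX2 hXYsq (sq_nonneg _) (sq_nonneg _) hPR hcrux'
  calc a1*a2^3 < ((a2+(t1+t2)/2)^2 - ((t1-t2)/2)^2)*((a2+(t3+t4)/2)^2 - ((t3-t4)/2)^2) := this
    _ = (a2+t1)*(a2+t2)*(a2+t3)*(a2+t4) := by ring

lemma key (a1 a2 t1 t2 t3 t4 : ℝ) (h0 : 0 < a1) (h1 : a1 < a2)
    (hs : t1+t2+t3+t4 = a1-a2) (hq : t1^2+t2^2+t3^2+t4^2 < (a2-a1)^2) :
    a1*a2^3 < (a2+t1)*(a2+t2)*(a2+t3)*(a2+t4) := by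
  rcases le_total (t3+t4) (t1+t2) with h|h
  · exact half a1 a2 t1 t2 t3 t4 h0 h1 hs hq h
  · calc a1*a2^3 < (a2+t3)*(a2+t4)*(a2+t1)*(a2+t2) :=
        half a1 a2 t3 t4 t1 t2 h0 h1 (by linarith) (by linarith) h
      _ = (a2+t1)*(a2+t2)*(a2+t3)*(a2+t4) := by ring

lemma no_four_real (a1 a2 A1 A2 r1 r2 r3 r4 : ℝ) (ha₁ : 0 < a1) (ha : a1 < a2)
    (hA₁ : 0 < A1) (hA₂ : 0 < A2)
    (heval : ∀ x : ℝ, (x+a1)*(x+a2)^3 + A1*x + A2*x^2 = (x-r1)*(x-r2)*(x-r3)*(x-r4)) :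
    False := by
  have h0 := heval 0
  have h1 := heval 1
  have h1' := heval (-1)
  have h2 := heval 2
  have h2' := heval (-2)
  have hsum : r1+r2+r3+r4 = -(a1+3*a2) := by linarith
  have he2 : r1*r2+r1*r3+r1*r4+r2*r3+r2*r4+r3*r4 = 3*a1*a2+3*a2^2+A2 := by linarith
  have hprod : r1*r2*r3*r4 = a1*a2^3 := by linarith
  have hsq : (r1+r2+r3+r4)^2 = (a1+3*a2)^2 := by rw [hsum]; ring
  have hs' : (-r1-a2)+(-r2-a2)+(-r3-a2)+(-r4-a2) = a1-a2 := by linarith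
  have hq' : (-r1-a2)^2+(-r2-a2)^2+(-r3-a2)^2+(-r4-a2)^2 < (a2-a1)^2 := by nlinarith [hsq, he2, hsum, hA₂]
  have hk := key a1 a2 (-r1-a2) (-r2-a2) (-r3-a2) (-r4-a2) ha₁ ha hs' hq'
  have hr : (a2+(-r1-a2))*(a2+(-r2-a2))*(a2+(-r3-a2))*(a2+(-r4-a2)) = r1*r2*r3*r4 := by ring
  linarith [hk, hr, hprod]

lemma card4 {α : Type*} {s : Multiset α} (h : Multiset.card s = 4) :
    ∃ a b c d, s = {a,b,c,d} := by
  classical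
  have hpos : 0 < Multiset.card s := by omega
  obtain ⟨a, ha⟩ := Multiset.card_pos_iff_exists_mem.mp hpos
  have hs : s = a ::ₘ s.erase a := (Multiset.cons_erase ha).symm
  have ht : Multiset.card (s.erase a) = 3 := by
    have := Multiset.card_erase_of_mem ha; rw [h] at this; simpa using this
  obtain ⟨b, c, d, he⟩ := Multiset.card_eq_three.mp ht
  exact ⟨a, b, c, d, by rw [hs, he]; rfl⟩

theorem quartic_not_four_real_roots
    (a₁ a₂ A₁ A₂ : ℝ) (ha₁ : 0 < a₁) (ha : a₁ < a₂) (hA₁ : 0 < A₁) (hA₂ : 0 < A₂) :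
    ((X + C a₁) * (X + C a₂) ^ 3 + C A₁ * X + C A₂ * X ^ 2 : ℝ[X]).roots.card ≠ 4 ∧
    ∃ z : ℂ, z.im ≠ 0 ∧
      Polynomial.aeval z
        ((X + C a₁) * (X + C a₂) ^ 3 + C A₁ * X + C A₂ * X ^ 2 : ℝ[X]) = 0 := by
  set Q : ℝ[X] := (X + C a₁) * (X + C a₂) ^ 3 + C A₁ * X + C A₂ * X ^ 2 with hQdef
  have hmonic : Q.Monic := by rw [hQdef]; monicity!
  have hdeg : Q.natDegree = 4 := by rw [hQdef]; compute_degree!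
  have part1 : Q.roots.card ≠ 4 := by
    intro hcard
    have hfact := prod_multiset_X_sub_C_of_monic_of_roots_card_eq hmonic (by rw [hdeg, hcard])
    obtain ⟨r1, r2, r3, r4, hr⟩ := card4 hcard
    rw [hr] at hfact
    simp only [Multiset.insert_eq_cons, Multiset.map_cons, Multiset.map_singleton,
      Multiset.prod_cons, Multiset.prod_singleton] at hfact
    refine no_four_real a₁ a₂ A₁ A₂ r1 r2 r3 r4 ha₁ ha hA₁ hA₂ fun x => ?_
    have h := congrArg (eval x) hfact
    simp only [hQdef, eval_add, eval_mul, eval_pow, eval_sub, eval_X, eval_C] at h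
    linear_combination - h
  refine ⟨part1, ?_⟩
  by_contra hno
  push_neg at hno
  have hQ0 : Q ≠ 0 := hmonic.ne_zero
  have hsplits : Splits (Q.map (algebraMap ℝ ℂ)) := IsAlgClosed.splits _
  have hdegC : (Q.map (algebraMap ℝ ℂ)).natDegree = 4 := by rw [natDegree_map, hdeg]
  have hcardC : (Q.map (algebraMap ℝ ℂ)).roots.card = 4 := by
    rw [← hdegC]; exact (splits_iff_card_roots.mp hsplits)
  have hfact := prod_multiset_X_sub_C_of_monic_of_roots_card_eq (hmonic.map (algebraMap ℝ ℂ))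
    (by rw [hdegC, hcardC])
  obtain ⟨z1, z2, z3, z4, hr⟩ := card4 hcardC
  have hroot : ∀ z ∈ (Q.map (algebraMap ℝ ℂ)).roots, z.im = 0 := by
    intro z hz
    by_contra him
    exact hno z him (by
      rw [aeval_def, ← eval_map]
      exact (mem_roots (hmonic.map (algebraMap ℝ ℂ)).ne_zero).mp hz)
  have h1 : z1.im = 0 := hroot z1 (by rw [hr]; simp)
  have h2 : z2.im = 0 := hroot z2 (by rw [hr]; simp)
  have h3 : z3.im = 0 := hroot z3 (by rw [hr]; simp)
  have h4 : z4.im = 0 := hroot z4 (by rw [hr]; simp)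
  rw [hr] at hfact
  simp only [Multiset.insert_eq_cons, Multiset.map_cons, Multiset.map_singleton,
    Multiset.prod_cons, Multiset.prod_singleton] at hfact
  have hz1 : z1 = ((z1.re : ℝ) : ℂ) := Complex.ext (by simp) (by simp [h1])
  have hz2 : z2 = ((z2.re : ℝ) : ℂ) := Complex.ext (by simp) (by simp [h2])
  have hz3 : z3 = ((z3.re : ℝ) : ℂ) := Complex.ext (by simp) (by simp [h3])
  have hz4 : z4 = ((z4.re : ℝ) : ℂ) := Complex.ext (by simp) (by simp [h4])
  refine no_four_real a₁ a₂ A₁ A₂ z1.re z2.re z3.re z4.re ha₁ ha hA₁ hA₂ fun x => ?_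
  have h := congrArg (eval (x:ℂ)) hfact
  rw [eval_map, show ((x:ℂ)) = algebraMap ℝ ℂ x from rfl, eval₂_at_apply] at h
  rw [hz1, hz2, hz3, hz4] at h
  simp only [hQdef, eval_add, eval_mul, eval_pow, eval_sub, eval_X, eval_C,
    Complex.coe_algebraMap] at h
  have h' : (((x+a₁)*(x+a₂)^3 + A₁*x + A₂*x^2 : ℝ) : ℂ)
      = (((x-z1.re)*(x-z2.re)*(x-z3.re)*(x-z4.re) : ℝ) : ℂ) := by
    push_cast at h ⊢
    linear_combination -h
  exact_mod_cast h'
end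

section
/- Let a > 0 and let t be a real number with 0 < t < 3a/22. Then the quartic polynomial r(x) = (x+a)^4 + t·x^3 + 2·t·a·x^2 + t·(a^2 − t^2)·x = (x+a)^4 + t·x·((x+a)^2 − t^2) has four distinct real roots; in particular r(−a−2t) = t^3(10t − 3a) < 0, r(−a) = a·t^3 > 0, and r(−a+2t) = t^3(22t − 3a) < 0. -/
open Polynomial Set

theorem quartic_four_distinct_real_roots
    (a t : ℝ) (ha : 0 < a) (ht : 0 < t) (ht' : t < 3 * a / 22) :
    (∀ x : ℝ, (x + a) ^ 4 + t * x ^ 3 + 2 * t * a * x ^ 2 + t * (a ^ 2 - t ^ 2) * x =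
        (x + a) ^ 4 + t * x * ((x + a) ^ 2 - t ^ 2)) ∧
    Set.encard {x : ℝ |
        (x + a) ^ 4 + t * x ^ 3 + 2 * t * a * x ^ 2 + t * (a ^ 2 - t ^ 2) * x = 0} = 4 ∧
    ((-a - 2 * t + a) ^ 4 + t * (-a - 2 * t) ^ 3 + 2 * t * a * (-a - 2 * t) ^ 2 +
        t * (a ^ 2 - t ^ 2) * (-a - 2 * t) = t ^ 3 * (10 * t - 3 * a)) ∧
    t ^ 3 * (10 * t - 3 * a) < 0 ∧
    ((-a + a) ^ 4 + t * (-a) ^ 3 + 2 * t * a * (-a) ^ 2 +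
        t * (a ^ 2 - t ^ 2) * (-a) = a * t ^ 3) ∧
    0 < a * t ^ 3 ∧
    ((-a + 2 * t + a) ^ 4 + t * (-a + 2 * t) ^ 3 + 2 * t * a * (-a + 2 * t) ^ 2 +
        t * (a ^ 2 - t ^ 2) * (-a + 2 * t) = t ^ 3 * (22 * t - 3 * a)) ∧
    t ^ 3 * (22 * t - 3 * a) < 0 := by
  refine ⟨fun x => by ring, ?_, by ring,
    mul_neg_of_pos_of_neg (pow_pos ht 3) (by linarith),
    by ring, by positivity, by ring,
    mul_neg_of_pos_of_neg (pow_pos ht 3) (by linarith)⟩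
  set f : ℝ → ℝ := fun x =>
    (x + a) ^ 4 + t * x ^ 3 + 2 * t * a * x ^ 2 + t * (a ^ 2 - t ^ 2) * x with hf
  have hcont : Continuous f := by fun_prop
  have h2t : 2 * t < a := by linarith
  -- values
  have hvA : 0 < f (-2 * a) := by
    show 0 < (-2*a + a) ^ 4 + t * (-2*a) ^ 3 + 2 * t * a * (-2*a) ^ 2 + t * (a ^ 2 - t ^ 2) * (-2*a)
    nlinarith [mul_pos (pow_pos ha 3) (show 0 < a - 2*t by linarith),
      mul_pos ha (pow_pos ht 3)]
  have hvB : f (-a - 2 * t) < 0 := by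
    show (-a - 2*t + a) ^ 4 + t * (-a - 2*t) ^ 3 + 2 * t * a * (-a - 2*t) ^ 2 + t * (a ^ 2 - t ^ 2) * (-a - 2*t) < 0
    nlinarith [mul_neg_of_pos_of_neg (pow_pos ht 3) (show 10*t - 3*a < 0 by linarith)]
  have hvC : 0 < f (-a) := by
    show 0 < (-a + a) ^ 4 + t * (-a) ^ 3 + 2 * t * a * (-a) ^ 2 + t * (a ^ 2 - t ^ 2) * (-a)
    nlinarith [mul_pos ha (pow_pos ht 3)]
  have hvD : f (-a + 2 * t) < 0 := by
    show (-a + 2*t + a) ^ 4 + t * (-a + 2*t) ^ 3 + 2 * t * a * (-a + 2*t) ^ 2 + t * (a ^ 2 - t ^ 2) * (-a + 2*t) < 0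
    nlinarith [mul_neg_of_pos_of_neg (pow_pos ht 3) (show 22*t - 3*a < 0 by linarith)]
  have hvE : 0 < f 0 := by
    show 0 < (0 + a) ^ 4 + t * 0 ^ 3 + 2 * t * a * 0 ^ 2 + t * (a ^ 2 - t ^ 2) * 0
    nlinarith [pow_pos ha 4]
  -- IVT helpers
  have ivt_pn : ∀ u v : ℝ, u ≤ v → 0 < f u → f v < 0 → ∃ x ∈ Set.Ioo u v, f x = 0 := by
    intro u v huv hu hv
    obtain ⟨x, hx, hfx⟩ := intermediate_value_Ioo' huv hcont.continuousOn ⟨hv, hu⟩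
    exact ⟨x, hx, hfx⟩
  have ivt_np : ∀ u v : ℝ, u ≤ v → f u < 0 → 0 < f v → ∃ x ∈ Set.Ioo u v, f x = 0 := by
    intro u v huv hu hv
    obtain ⟨x, hx, hfx⟩ := intermediate_value_Ioo huv hcont.continuousOn ⟨hu, hv⟩
    exact ⟨x, hx, hfx⟩
  obtain ⟨x1, hx1, hr1⟩ := ivt_pn (-2*a) (-a - 2*t) (by linarith) hvA hvB
  obtain ⟨x2, hx2, hr2⟩ := ivt_np (-a - 2*t) (-a) (by linarith) hvB hvC
  obtain ⟨x3, hx3, hr3⟩ := ivt_pn (-a) (-a + 2*t) (by linarith) hvC hvD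
  obtain ⟨x4, hx4, hr4⟩ := ivt_np (-a + 2*t) 0 (by linarith) hvD hvE
  have h12 : x1 < x2 := lt_trans hx1.2 hx2.1
  have h23 : x2 < x3 := lt_trans hx2.2 hx3.1
  have h34 : x3 < x4 := lt_trans hx3.2 hx4.1
  -- the polynomial
  set p : ℝ[X] := X ^ 4 + C (4*a + t) * X ^ 3 + C (6*a^2 + 2*t*a) * X ^ 2 +
      C (4*a^3 + t*(a^2 - t^2)) * X + C (a^4) with hpdef
  have hdeg : p.natDegree = 4 := by
    rw [hpdef]; compute_degree!
  have hp0 : p ≠ 0 := by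
    intro h; rw [h] at hdeg; simp at hdeg
  have heval : ∀ x, p.eval x = f x := by
    intro x; simp only [hpdef, hf, eval_add, eval_mul, eval_pow, eval_X, eval_C]; ring
  have hset : {x : ℝ | (x + a) ^ 4 + t * x ^ 3 + 2 * t * a * x ^ 2 + t * (a ^ 2 - t ^ 2) * x = 0}
      = ↑p.roots.toFinset := by
    ext x
    simp only [Set.mem_setOf_eq, Finset.coe_sort_coe, Finset.mem_coe, Multiset.mem_toFinset,
      mem_roots hp0, IsRoot, heval]
    exact Iff.rfl
  rw [hset, Set.encard_coe_eq_coe_finsetCard]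
  have hle : p.roots.toFinset.card ≤ 4 := by
    calc p.roots.toFinset.card ≤ Multiset.card p.roots := Multiset.toFinset_card_le _
      _ ≤ p.natDegree := p.card_roots'
      _ = 4 := hdeg
  have hsub : ({x1, x2, x3, x4} : Finset ℝ) ⊆ p.roots.toFinset := by
    intro x hx
    simp only [Finset.mem_insert, Finset.mem_singleton] at hx
    rw [Multiset.mem_toFinset, mem_roots hp0]
    rcases hx with h | h | h | h <;> subst h <;>
      simp only [IsRoot, heval] <;> assumption
  have h13 := h12.trans h23
  have h14 := h13.trans h34
  have h24 := h23.trans h34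
  have hcard4 : ({x1, x2, x3, x4} : Finset ℝ).card = 4 := by
    rw [Finset.card_insert_of_notMem (by simp [h12.ne, h13.ne, h14.ne]),
      Finset.card_insert_of_notMem (by simp [h23.ne, h24.ne]),
      Finset.card_insert_of_notMem (by simp [h34.ne]), Finset.card_singleton]
  have hge : 4 ≤ p.roots.toFinset.card := by
    calc 4 = ({x1, x2, x3, x4} : Finset ℝ).card := hcard4.symm
      _ ≤ p.roots.toFinset.card := Finset.card_le_card hsub
  have : p.roots.toFinset.card = 4 := le_antisymm hle hge
  exact_mod_cast congrArg Nat.cast this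
end

section
/- Let n ≥ 2, let α > 0, let l ∈ {1, …, n−1}, and let b_1, …, b_n > 0 satisfy b_1·b_2⋯b_n = α^n and e_{n−l}(b_1,…,b_n) = C(n, l)·α^{n−l}, where e_{n−l} is the elementary symmetric polynomial of degree n−l and C(n,l) is the binomial coefficient. Then b_1 = b_2 = … = b_n = α. -/
open Finset

private lemma count_symm {n : ℕ} (k : ℕ) (i j : Fin n) :
    ((Finset.univ.powersetCard k).filter (fun t => i ∈ t)).card =
    ((Finset.univ.powersetCard k).filter (fun t => j ∈ t)).card := by
  apply Finset.card_nbij' (fun t => t.map (Equiv.swap i j).toEmbedding)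
    (fun t => t.map (Equiv.swap i j).toEmbedding)
  · intro t ht
    simp only [Finset.mem_coe, mem_filter, mem_powersetCard_univ] at ht ⊢
    refine ⟨by simp [ht.1], ?_⟩
    rw [Finset.mem_map_equiv]
    simpa using ht.2
  · intro t ht
    simp only [Finset.mem_coe, mem_filter, mem_powersetCard_univ] at ht ⊢
    refine ⟨by simp [ht.1], ?_⟩
    rw [Finset.mem_map_equiv]
    simpa using ht.2
  · intro t ht
    simp only [Finset.map_map]
    ext a
    simp [Finset.mem_map, Function.Embedding.trans_apply]
  · intro t ht
    simp only [Finset.map_map]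
    ext a
    simp [Finset.mem_map, Function.Embedding.trans_apply]

private lemma double_sum_eq {n : ℕ} (hn : 0 < n) (k : ℕ) (f : Fin n → ℝ)
    (hf : ∑ i, f i = 0) :
    ∑ t ∈ Finset.univ.powersetCard k, ∑ i ∈ t, f i = 0 := by
  have i₀ : Fin n := ⟨0, hn⟩
  set S := (Finset.univ : Finset (Fin n)).powersetCard k with hS
  set d : ℕ := (S.filter (fun t => i₀ ∈ t)).card with hd
  have hcount : ∀ i : Fin n, (S.filter (fun t => i ∈ t)).card = d :=
    fun i => count_symm k i i₀
  calc ∑ t ∈ S, ∑ i ∈ t, f i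
      = ∑ t ∈ S, ∑ i : Fin n, if i ∈ t then f i else 0 := by
        refine Finset.sum_congr rfl fun t _ => ?_
        rw [Finset.sum_ite_mem, Finset.univ_inter]
    _ = ∑ i : Fin n, ∑ t ∈ S, if i ∈ t then f i else 0 := Finset.sum_comm
    _ = ∑ i : Fin n, (d : ℝ) * f i := by
        refine Finset.sum_congr rfl fun i _ => ?_
        rw [Finset.sum_ite, Finset.sum_const, Finset.sum_const_zero, add_zero,
          hcount i, nsmul_eq_mul]
    _ = (d : ℝ) * ∑ i, f i := by rw [Finset.mul_sum]
    _ = 0 := by rw [hf, mul_zero]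

theorem esymm_amgm_equality_case
    (n : ℕ) (hn : 2 ≤ n) (α : ℝ) (hα : 0 < α)
    (l : ℕ) (hl : 1 ≤ l) (hl' : l ≤ n - 1)
    (b : Fin n → ℝ) (hb : ∀ i, 0 < b i)
    (hprod : ∏ i, b i = α ^ n)
    (hesymm : ∑ t ∈ (Finset.univ : Finset (Fin n)).powersetCard (n - l), ∏ i ∈ t, b i =
      (n.choose l : ℝ) * α ^ (n - l)) :
    ∀ i, b i = α := by
  set k := n - l with hk
  have hln : l ≤ n := le_trans hl' (Nat.sub_le n 1)
  have hk1 : 1 ≤ k := by omega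
  have hkn : k ≤ n - 1 := by omega
  set c : Fin n → ℝ := fun i => b i / α with hc
  have hcpos : ∀ i, 0 < c i := fun i => div_pos (hb i) hα
  have hcprod : ∏ i, c i = 1 := by
    simp only [hc, Finset.prod_div_distrib, Finset.prod_const, hprod]
    rw [Finset.card_univ, Fintype.card_fin, div_self (by positivity)]
  set S := (Finset.univ : Finset (Fin n)).powersetCard k with hS
  set N := n.choose l with hN
  have hcardS : S.card = N := by
    rw [hS, Finset.card_powersetCard, Finset.card_univ, Fintype.card_fin, hk,
      Nat.choose_symm hln]
  have hNpos : 0 < N := Nat.choose_pos hln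
  -- sum of subset-products of c equals N
  have hcsum : ∑ t ∈ S, ∏ i ∈ t, c i = (N : ℝ) := by
    have : ∀ t ∈ S, ∏ i ∈ t, c i = (∏ i ∈ t, b i) / α ^ k := by
      intro t ht
      rw [hS, Finset.mem_powersetCard_univ] at ht
      simp [hc, Finset.prod_div_distrib, ht]
    rw [Finset.sum_congr rfl this, ← Finset.sum_div, hesymm,
      mul_div_assoc, div_self (by positivity), mul_one]
  -- sum of logs of subset-products is 0
  have hlogsum : ∑ t ∈ S, Real.log (∏ i ∈ t, c i) = 0 := by
    have h1 : ∀ t ∈ S, Real.log (∏ i ∈ t, c i) = ∑ i ∈ t, Real.log (c i) := by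
      intro t _
      exact Real.log_prod (s := t) (f := c) (fun i _ => (hcpos i).ne')
    rw [Finset.sum_congr rfl h1]
    exact double_sum_eq (by omega) k _ (by
      rw [← Real.log_prod (fun i _ => (hcpos i).ne'), hcprod, Real.log_one])
  -- Jensen equality case: all subset products are equal
  have hw : ∀ t ∈ S, (0 : ℝ) < (N : ℝ)⁻¹ := fun _ _ => by positivity
  have hw1 : ∑ _t ∈ S, (N : ℝ)⁻¹ = 1 := by
    rw [Finset.sum_const, hcardS, nsmul_eq_mul, mul_inv_cancel₀ (by positivity)]
  have hmem : ∀ t ∈ S, (∏ i ∈ t, c i) ∈ Set.Ioi (0 : ℝ) :=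
    fun t _ => Finset.prod_pos (fun i _ => hcpos i)
  have heq : Real.log (∑ t ∈ S, (N : ℝ)⁻¹ • (∏ i ∈ t, c i)) ≤
      ∑ t ∈ S, (N : ℝ)⁻¹ • Real.log (∏ i ∈ t, c i) := by
    simp only [smul_eq_mul, ← Finset.mul_sum, hcsum, hlogsum, mul_zero]
    rw [inv_mul_cancel₀ (by positivity : (N:ℝ) ≠ 0), Real.log_one]
  have hall := strictConcaveOn_log_Ioi.eq_of_map_sum_eq hw hw1 hmem heq
  -- deduce all c i equal
  have hceq : ∀ i j : Fin n, c i = c j := by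
    intro i j
    rcases eq_or_ne i j with rfl | hij
    · rfl
    · obtain ⟨s₀, hs₀sub, hs₀card⟩ :=
        Finset.exists_subset_card_eq (s := (Finset.univ : Finset (Fin n)) \ {i, j})
          (n := k - 1) (by
            rw [Finset.card_sdiff_of_subset (by simp), Finset.card_univ, Fintype.card_fin]
            have : ({i, j} : Finset (Fin n)).card = 2 := by
              rw [Finset.card_insert_of_notMem (by simpa using hij), Finset.card_singleton]
            omega)
      have hi₀ : i ∉ s₀ := fun h => by simpa using (hs₀sub h)
      have hj₀ : j ∉ s₀ := fun h => by simpa using (hs₀sub h)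
      have hti : insert i s₀ ∈ S := by
        rw [hS, Finset.mem_powersetCard_univ, Finset.card_insert_of_notMem hi₀, hs₀card]
        omega
      have htj : insert j s₀ ∈ S := by
        rw [hS, Finset.mem_powersetCard_univ, Finset.card_insert_of_notMem hj₀, hs₀card]
        omega
      have := hall hti htj
      rw [Finset.prod_insert hi₀, Finset.prod_insert hj₀] at this
      have hp : 0 < ∏ x ∈ s₀, c x := Finset.prod_pos (fun x _ => hcpos x)
      exact mul_right_cancel₀ hp.ne' this
  -- conclude
  intro i
  have hcone : c i = 1 := by
    have : ∏ j, c j = c i ^ n := by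
      rw [Finset.prod_congr rfl (fun j _ => hceq j i), Finset.prod_const,
        Finset.card_univ, Fintype.card_fin]
    rw [this] at hcprod
    exact (pow_left_inj₀ (le_of_lt (hcpos i)) zero_le_one (by omega : n ≠ 0)).mp
      (by rw [hcprod, one_pow])
  rw [hc] at hcone
  field_simp at hcone
  simpa using hcone
end
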